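/- Let P be a scale group acting on T_{q+1}. Then: (1) the only compact normal subgroup of P is the trivial subgroup; (2) P^(e) is an open normal subgroup of P, and the level-shift homomorphism n : P → ℤ is surjective with kernel P^(e) (so P/P^(e) ≅ ℤ); (3) V := Stab_P(ṽ₀) is a compact open subgroup of P and there exists x ∈ P with xVx⁻¹ ≤ V and ⋃_{n∈ℤ} xⁿVx⁻ⁿ = P^(e). -/

import Mathlib

namespace Scale

/-- A vertex of the `(q+1)`-regular tree `T_{q+1}`: a level `n ∈ ℤ` together with a
labelling `ℤ → Fin q` which vanishes above the level and for all sufficiently small indices. -/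
@[ext] structure Vertex (q : ℕ) where
  level : ℤ
  lab : ℤ → Fin q
  zero_gt : ∀ i : ℤ, level < i → (lab i : ℕ) = 0
  bdd : ∃ N : ℤ, ∀ i : ℤ, i < N → (lab i : ℕ) = 0

namespace Vertex

variable {q : ℕ} [NeZero q]

/-- The parent `v⁺` of a vertex. -/
def parent (v : Vertex q) : Vertex q where
  level := v.level - 1
  lab := fun i => if v.level - 1 < i then 0 else v.lab i
  zero_gt := by intro i hi; simp [hi]
  bdd := by
    obtain ⟨N, hN⟩ := v.bdd
    refine ⟨N, fun i hi => ?_⟩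
    by_cases h : v.level - 1 < i
    · simp [h]
    · simp [h, hN i hi]

/-- The child `vj` of a vertex `v`. -/
def child (v : Vertex q) (j : Fin q) : Vertex q where
  level := v.level + 1
  lab := fun i => if i = v.level + 1 then j else v.lab i
  zero_gt := by
    intro i hi
    have h1 : i ≠ v.level + 1 := by omega
    simp [h1, v.zero_gt i (by omega)]
  bdd := by
    obtain ⟨N, hN⟩ := v.bdd
    refine ⟨min N (v.level + 1), fun i hi => ?_⟩
    have h1 : i < N := lt_of_lt_of_le hi (min_le_left _ _)
    have h2 : i < v.level + 1 := lt_of_lt_of_le hi (min_le_right _ _)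
    have h3 : i ≠ v.level + 1 := by omega
    simp [h3, hN i h1]

/-- The restriction `w|_m` of a vertex to level `m`. -/
def trunc (v : Vertex q) (m : ℤ) : Vertex q where
  level := m
  lab := fun i => if m < i then 0 else v.lab i
  zero_gt := by intro i hi; simp [hi]
  bdd := by
    obtain ⟨N, hN⟩ := v.bdd
    refine ⟨N, fun i hi => ?_⟩
    by_cases h : m < i
    · simp [h]
    · simp [h, hN i hi]

/-- `w` is a descendant of `u` (in the rooted subtree `T_u`). -/
def Descendant (u w : Vertex q) : Prop := u.level ≤ w.level ∧ trunc w u.level = u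

end Vertex

/-- The all-zero vertex `ṽ_n` at level `n`. -/
def zeroVtx (q : ℕ) [NeZero q] (n : ℤ) : Vertex q where
  level := n
  lab := fun _ => 0
  zero_gt := by intro i _; simp
  bdd := ⟨0, by intro i _; simp⟩

/-- The map shifting all labels by `k` (a translation towards the end `ω` when `k > 0`). -/
def shiftMap {q : ℕ} (k : ℤ) (v : Vertex q) : Vertex q where
  level := v.level + k
  lab := fun i => v.lab (i - k)
  zero_gt := fun i hi => v.zero_gt (i - k) (by omega)
  bdd := by
    obtain ⟨N, hN⟩ := v.bdd
    exact ⟨N + k, fun i hi => hN (i - k) (by omega)⟩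

/-- The translation `x̃₀ᵏ` of `T_{q+1}` as a permutation of the vertices. -/
def shiftPerm (q : ℕ) (k : ℤ) : Equiv.Perm (Vertex q) where
  toFun := shiftMap k
  invFun := shiftMap (-k)
  left_inv := by
    intro v
    refine Vertex.ext ?_ ?_
    · show v.level + k + -k = v.level
      omega
    · funext i
      show v.lab (i - -k - k) = v.lab i
      congr 1
      omega
  right_inv := by
    intro v
    refine Vertex.ext ?_ ?_
    · show v.level + -k + k = v.level
      omega
    · funext i
      show v.lab (i - k - -k) = v.lab i
      congr 1
      omega

/-- The group `Isom(T_{q+1})_ω` of tree automorphisms fixing the distinguished end `ω`,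
realised as the subgroup of permutations of the vertex set commuting with `parent`. -/
def IsomOmega (q : ℕ) [NeZero q] : Subgroup (Equiv.Perm (Vertex q)) where
  carrier := {x | ∀ v : Vertex q, x (Vertex.parent v) = Vertex.parent (x v)}
  one_mem' := fun _ => rfl
  mul_mem' := by
    intro a b ha hb v
    show (a * b) (Vertex.parent v) = Vertex.parent ((a * b) v)
    rw [Equiv.Perm.mul_apply, Equiv.Perm.mul_apply, hb, ha]
  inv_mem' := by
    intro a ha v
    show a⁻¹ (Vertex.parent v) = Vertex.parent (a⁻¹ v)
    have h := ha (a⁻¹ v)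
    rw [show ∀ x, a (a⁻¹ x) = x from fun x => (Equiv.eq_symm_apply a).mp rfl] at h
    rw [← h, show ∀ x, a⁻¹ (a x) = x from fun x => Equiv.Perm.inv_eq_iff_eq.mpr rfl]

/-- The level shift `n(x)` of an automorphism (evaluated at the zero vertex; for members
of `IsomOmega q` the shift is the same at every vertex). -/
def lshift {q : ℕ} [NeZero q] (x : Equiv.Perm (Vertex q)) : ℤ := (x (zeroVtx q 0)).level

/-- An automorphism is elliptic if it fixes a vertex. -/
def Elliptic {q : ℕ} (x : Equiv.Perm (Vertex q)) : Prop := ∃ v : Vertex q, x v = v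

/-- Topology of pointwise convergence on `X → X` for `X` discrete. -/
def funTop (X : Type*) : TopologicalSpace (X → X) :=
  @Pi.topologicalSpace X (fun _ => X) (fun _ => ⊥)

/-- The permutation topology on `Equiv.Perm X`: pointwise stabilisers of finite sets of
points form a neighbourhood basis of the identity. -/
def permTop (X : Type*) : TopologicalSpace (Equiv.Perm X) :=
  @TopologicalSpace.induced (Equiv.Perm X) ((X → X) × (X → X))
    (fun g => ((g : X → X), ((g⁻¹ : Equiv.Perm X) : X → X)))
    (@instTopologicalSpaceProd _ _ (funTop X) (funTop X))

instance (q : ℕ) : TopologicalSpace (Equiv.Perm (Vertex q)) := permTop _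

instance (q : ℕ) : TopologicalSpace (Equiv.Perm (List (Fin q))) := permTop _

/-- A scale group: a closed subgroup of `Isom(T_{q+1})_ω` acting transitively on vertices. -/
def IsScaleGroup {q : ℕ} [NeZero q] (P : Subgroup (Equiv.Perm (Vertex q))) : Prop :=
  P ≤ IsomOmega q ∧ IsClosed (P : Set (Equiv.Perm (Vertex q))) ∧
    ∀ v w : Vertex q, ∃ x ∈ P, x v = w

/-- The stabiliser of the vertex `v` in `P`, as a subgroup of the ambient permutation group. -/
def stabIn {q : ℕ} (P : Subgroup (Equiv.Perm (Vertex q))) (v : Vertex q) :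
    Subgroup (Equiv.Perm (Vertex q)) where
  carrier := {g | g ∈ P ∧ g v = v}
  one_mem' := ⟨P.one_mem, rfl⟩
  mul_mem' := by
    intro a b ha hb
    exact ⟨P.mul_mem ha.1 hb.1, by rw [Equiv.Perm.mul_apply, hb.2, ha.2]⟩
  inv_mem' := by
    intro a ha
    refine ⟨P.inv_mem ha.1, ?_⟩
    rw [Equiv.Perm.inv_eq_iff_eq]
    exact ha.2.symm

/-- The conjugate subgroup `xVx⁻¹`. -/
def conjSub {G : Type*} [Group G] (x : G) (V : Subgroup G) : Subgroup G :=
  V.map (MulAut.conj x).toMonoidHom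

/-- The vertex `ξ|_m` on the ray towards the end represented by `ξ`. -/
def ray (q : ℕ) [NeZero q] (ξ : ℤ → Fin q) (N : ℤ) (hξ : ∀ i : ℤ, i < N → (ξ i : ℕ) = 0)
    (m : ℤ) : Vertex q where
  level := m
  lab := fun i => if m < i then 0 else ξ i
  zero_gt := by intro i hi; simp [hi]
  bdd := by
    refine ⟨N, fun i hi => ?_⟩
    by_cases h : m < i
    · simp [h]
    · simp [h, hξ i hi]

/-- The contraction group of `x` in `P`. -/
def conSet {q : ℕ} (P : Subgroup (Equiv.Perm (Vertex q))) (x : Equiv.Perm (Vertex q)) :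
    Set (Equiv.Perm (Vertex q)) :=
  {g | g ∈ P ∧ ∀ v : Vertex q, ∃ N : ℕ, ∀ n : ℕ, N ≤ n → (x ^ n * g * (x ^ n)⁻¹) v = v}


/-- `c` is a `P`-labelling of `T_{q+1}` with distinguished bi-infinite path `vp`:
each `c v` is a bijection from the directed edges out of `v` (encoded as the
neighbours of `v`) to `{0, …, q}`; the edge towards the parent is labelled `q`;
along the path `vp` the downward edges are labelled `0`; and `P` contains, for
all `u₁, u₂`, an element carrying `u₁` to `u₂` and preserving the labels on the
rooted subtree of descendants of `u₁`. -/
def IsPLabelling {q : ℕ} [NeZero q] (P : Subgroup (Equiv.Perm (Vertex q)))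
    (c : Vertex q → Vertex q → Fin (q + 1)) (vp : ℤ → Vertex q) : Prop :=
  (∀ v : Vertex q, ∀ j : Fin (q + 1),
      ∃! w : Vertex q, (Vertex.parent w = v ∨ w = Vertex.parent v) ∧ c v w = j) ∧
  (∀ v : Vertex q, (c v (Vertex.parent v) : ℕ) = q) ∧
  (∀ n : ℤ, Vertex.parent (vp (n + 1)) = vp n) ∧
  (∀ n : ℤ, (c (vp n) (vp (n + 1)) : ℕ) = 0) ∧
  (∀ u₁ u₂ : Vertex q, ∃ x, x ∈ P ∧ x u₁ = u₂ ∧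
    ∀ w w' : Vertex q, Vertex.Descendant u₁ w → Vertex.Descendant u₁ w' →
      (Vertex.parent w = w' ∨ Vertex.parent w' = w) → c (x w) (x w') = c w w')

open Classical in
/-- The standard labelling of `T_{q+1}`: the edge from `v` to its child `vj` is
labelled `j` and the edge towards the parent is labelled `q`. -/
noncomputable def stdLabel (q : ℕ) [NeZero q] : Vertex q → Vertex q → Fin (q + 1) :=
  fun v w =>
    if Vertex.parent w = v then Fin.castLE (Nat.le_succ q) (w.lab (v.level + 1))
    else Fin.last q

/-- Convert an edge label in `{0,…,q}` known to be `< q` into a letter in `{0,…,q-1}`. -/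
def toFinQ {q : ℕ} [NeZero q] (j : Fin (q + 1)) : Fin q :=
  if h : (j : ℕ) < q then ⟨j, h⟩ else ⟨0, Nat.pos_of_ne_zero (NeZero.ne q)⟩

/-- The string of labels read along the downward path of length `d` ending at `w`. -/
def labelString {q : ℕ} [NeZero q] (c : Vertex q → Vertex q → Fin (q + 1)) :
    Vertex q → ℕ → List (Fin q)
  | _, 0 => []
  | w, (d + 1) => labelString c (Vertex.parent w) d ++ [toFinQ (c (Vertex.parent w) w)]

/-- The isomorphism `φ^c_v : T_v → T_{q,q}` given by a labelling `c`: a descendant `w`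
of `v` is sent to the string of labels along the path from `v` down to `w`. -/
def phiStr {q : ℕ} [NeZero q] (c : Vertex q → Vertex q → Fin (q + 1)) (v w : Vertex q) :
    List (Fin q) :=
  labelString c w ((w.level - v.level).toNat)

/-- The set `P|_v = {φ^c_{x(v)} ∘ x ∘ (φ^c_v)⁻¹ : x ∈ P}` of sections of elements of `P`
at the vertex `v`, with respect to the labelling `c`. -/
def sectSet {q : ℕ} [NeZero q] (P : Subgroup (Equiv.Perm (Vertex q)))
    (c : Vertex q → Vertex q → Fin (q + 1)) (v : Vertex q) :
    Set (Equiv.Perm (List (Fin q))) :=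
  {g | ∃ x, x ∈ P ∧ ∀ w : Vertex q, Vertex.Descendant v w →
        g (phiStr c v w) = phiStr c (x v) (x w)}

/-- The standard isomorphism `φ_v : T_v → T_{q,q}`: a descendant `w` of `v` of level `m`
is sent to the string `(w_{n+1}, …, w_m)` where `n` is the level of `v`. -/
def stdStr {q : ℕ} (v w : Vertex q) : List (Fin q) :=
  (List.range (w.level - v.level).toNat).map fun k => w.lab (v.level + 1 + k)

/-- The set `{φ_{x(v)} ∘ x ∘ φ_v⁻¹ : x ∈ P}` with respect to the standard isomorphisms. -/
def stdSect {q : ℕ} [NeZero q] (P : Subgroup (Equiv.Perm (Vertex q))) (v : Vertex q) :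
    Set (Equiv.Perm (List (Fin q))) :=
  {g | ∃ x, x ∈ P ∧ ∀ w : Vertex q, Vertex.Descendant v w →
        g (stdStr v w) = stdStr (x v) (x w)}

/-- `Isom(T_{q,q})`: the group of permutations of the set of finite strings over
`{0,…,q-1}` preserving length and the prefix relation. -/
def RIsom (q : ℕ) : Subgroup (Equiv.Perm (List (Fin q))) where
  carrier := {g | (∀ l : List (Fin q), (g l).length = l.length) ∧
    ∀ l₁ l₂ : List (Fin q), l₁ <+: l₂ → g l₁ <+: g l₂}
  one_mem' := ⟨fun _ => rfl, fun _ _ h => h⟩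
  mul_mem' := by
    intro a b ha hb
    constructor
    · intro l
      rw [Equiv.Perm.mul_apply, ha.1, hb.1]
    · intro l₁ l₂ h
      rw [Equiv.Perm.mul_apply, Equiv.Perm.mul_apply]
      exact ha.2 _ _ (hb.2 _ _ h)
  inv_mem' := by
    intro a ha
    have hlen : ∀ l : List (Fin q), (a⁻¹ l).length = l.length := by
      intro l
      have h := ha.1 (a⁻¹ l)
      rw [show ∀ x, a (a⁻¹ x) = x from fun x => (Equiv.eq_symm_apply a).mp rfl] at h
      exact h.symm
    refine ⟨hlen, ?_⟩
    intro l₁ l₂ h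
    have htake : List.take (a⁻¹ l₁).length (a⁻¹ l₂) <+: a⁻¹ l₂ := List.take_prefix _ _
    have h2 : a (List.take (a⁻¹ l₁).length (a⁻¹ l₂)) <+: a (a⁻¹ l₂) := ha.2 _ _ htake
    rw [show ∀ x, a (a⁻¹ x) = x from fun x => (Equiv.eq_symm_apply a).mp rfl] at h2
    have hle : l₁.length ≤ l₂.length := h.length_le
    have hlen3 : (a (List.take (a⁻¹ l₁).length (a⁻¹ l₂))).length = l₁.length := by
      rw [ha.1, List.length_take, hlen, hlen]
      omega
    have hpre : a (List.take (a⁻¹ l₁).length (a⁻¹ l₂)) <+: l₁ :=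
      List.prefix_of_prefix_length_le h2 h (le_of_eq hlen3)
    have heq : a (List.take (a⁻¹ l₁).length (a⁻¹ l₂)) = l₁ := hpre.eq_of_length hlen3
    have heq2 : List.take (a⁻¹ l₁).length (a⁻¹ l₂) = a⁻¹ l₁ := by
      apply a.injective
      rw [heq, show ∀ x, a (a⁻¹ x) = x from fun x => (Equiv.eq_symm_apply a).mp rfl]
    rw [← heq2]
    exact List.take_prefix _ _

/-- A subgroup of `Isom(T_{q,q})` is self-replicating if it is self-similar, transitive
on level 1, and all the section homomorphisms `g ↦ g|_w` are surjective. -/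
def SelfReplicating {q : ℕ} (G : Subgroup (Equiv.Perm (List (Fin q)))) : Prop :=
  (∀ w : List (Fin q), ∀ g, g ∈ G → g w = w →
      ∃ g', g' ∈ G ∧ ∀ v : List (Fin q), g (w ++ v) = w ++ g' v) ∧
  (∀ j j' : Fin q, ∃ g ∈ G, g [j] = [j']) ∧
  (∀ w : List (Fin q), ∀ g', g' ∈ G →
      ∃ g, g ∈ G ∧ g w = w ∧ ∀ v : List (Fin q), g (w ++ v) = w ++ g' v)

/-- The stabiliser of the string `w` in `G ≤ Isom(T_{q,q})`, as a subgroup of `G`. -/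
def rstab {q : ℕ} (G : Subgroup (Equiv.Perm (List (Fin q)))) (w : List (Fin q)) :
    Subgroup G where
  carrier := {g | (g : Equiv.Perm (List (Fin q))) w = w}
  one_mem' := rfl
  mul_mem' := by
    intro a b ha hb
    show ((a * b : G) : Equiv.Perm (List (Fin q))) w = w
    rw [Subgroup.coe_mul, Equiv.Perm.mul_apply]
    rw [show (b : Equiv.Perm (List (Fin q))) w = w from hb,
      show (a : Equiv.Perm (List (Fin q))) w = w from ha]
  inv_mem' := by
    intro a ha
    show ((a⁻¹ : G) : Equiv.Perm (List (Fin q))) w = w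
    rw [Subgroup.coe_inv, Equiv.Perm.inv_eq_iff_eq]
    exact (show (a : Equiv.Perm (List (Fin q))) w = w from ha).symm


end Scale

namespace Scale

section Helpers

variable {q : ℕ} [NeZero q]

lemma mem_iso_iff {x : Equiv.Perm (Vertex q)} :
    x ∈ IsomOmega q ↔ ∀ v : Vertex q, x (Vertex.parent v) = Vertex.parent (x v) :=
  Iff.rfl

@[simp] lemma parent_level (v : Vertex q) : v.parent.level = v.level - 1 := rfl

@[simp] lemma trunc_level (v : Vertex q) (m : ℤ) : (v.trunc m).level = m := rfl

lemma trunc_self (v : Vertex q) : v.trunc v.level = v := by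
  refine Vertex.ext rfl ?_
  funext i
  show (if v.level < i then (0 : Fin q) else v.lab i) = v.lab i
  by_cases h : v.level < i
  · simp only [h, if_true]
    exact (Fin.ext (v.zero_gt i h)).symm
  · simp [h]

lemma parent_trunc (v : Vertex q) (m : ℤ) : (v.trunc m).parent = v.trunc (m - 1) := by
  refine Vertex.ext rfl ?_
  funext i
  show (if m - 1 < i then (0 : Fin q) else (v.trunc m).lab i)
      = (if m - 1 < i then (0 : Fin q) else v.lab i)
  by_cases h : m - 1 < i
  · simp [h]
  · have h2 : ¬ m < i := by omega
    simp [h, Vertex.trunc, h2]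

lemma parent_iter (v : Vertex q) (k : ℕ) :
    Vertex.parent^[k] v = v.trunc (v.level - k) := by
  induction k with
  | zero => simpa using (trunc_self v).symm
  | succ n ih =>
    rw [Function.iterate_succ_apply', ih, parent_trunc]
    congr 1
    push_cast
    ring

@[simp] lemma trunc_zeroVtx (n m : ℤ) : (zeroVtx q n).trunc m = zeroVtx q m := by
  refine Vertex.ext rfl ?_
  funext i
  show (if m < i then (0 : Fin q) else (0 : Fin q)) = (0 : Fin q)
  simp

lemma exists_trunc_zero (v : Vertex q) :
    ∃ M : ℤ, M ≤ v.level ∧ M ≤ 0 ∧ ∀ m ≤ M, v.trunc m = zeroVtx q m := by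
  obtain ⟨N, hN⟩ := v.bdd
  refine ⟨min (min v.level 0) (N - 1), le_trans (min_le_left _ _) (min_le_left _ _),
    le_trans (min_le_left _ _) (min_le_right _ _), fun m hm => ?_⟩
  refine Vertex.ext rfl ?_
  funext i
  show (if m < i then (0 : Fin q) else v.lab i) = (0 : Fin q)
  by_cases h : m < i
  · simp [h]
  · have : i < N := by
      have := le_trans hm (min_le_right _ _)
      omega
    simp only [h, if_false]
    exact Fin.ext (hN i this)

lemma iso_iter {x : Equiv.Perm (Vertex q)} (hx : x ∈ IsomOmega q) (v : Vertex q) (k : ℕ) :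
    x (Vertex.parent^[k] v) = Vertex.parent^[k] (x v) := by
  induction k with
  | zero => rfl
  | succ n ih =>
    rw [Function.iterate_succ_apply', Function.iterate_succ_apply', hx, ih]

lemma iso_level {x : Equiv.Perm (Vertex q)} (hx : x ∈ IsomOmega q) (v : Vertex q) :
    (x v).level = v.level + lshift x := by
  have key : ∀ (w : Vertex q) (k : ℕ),
      (x (Vertex.parent^[k] w)).level - (Vertex.parent^[k] w).level
        = (x w).level - w.level := by
    intro w k
    induction k with
    | zero => rfl
    | succ n ih =>
      rw [Function.iterate_succ_apply']
      have hx' : ∀ u : Vertex q, x (Vertex.parent u) = Vertex.parent (x u) := hx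
      rw [hx']
      simp only [parent_level]
      omega
  obtain ⟨M, hM1, hM2, hM3⟩ := exists_trunc_zero v
  have h1 : Vertex.parent^[(v.level - M).toNat] v = zeroVtx q M := by
    rw [parent_iter]
    rw [show (v.level - (v.level - M).toNat : ℤ) = M by omega]
    exact hM3 M le_rfl
  have h2 : Vertex.parent^[(0 - M).toNat] (zeroVtx q 0) = zeroVtx q M := by
    rw [parent_iter, trunc_zeroVtx]
    congr 1
    show ((zeroVtx q 0).level - ((0:ℤ) - M).toNat : ℤ) = M
    show ((0 : ℤ) - ((0:ℤ) - M).toNat : ℤ) = M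
    omega
  have e1 := key v ((v.level - M).toNat)
  have e2 := key (zeroVtx q 0) ((0 - M).toNat)
  rw [h1] at e1
  rw [h2] at e2
  have : (x v).level - v.level = (x (zeroVtx q 0)).level - (zeroVtx q 0).level := by
    rw [← e1, ← e2]
  show (x v).level = v.level + (x (zeroVtx q 0)).level
  have hz : (zeroVtx q 0).level = 0 := rfl
  omega

lemma iso_trunc {x : Equiv.Perm (Vertex q)} (hx : x ∈ IsomOmega q) (v : Vertex q)
    {m : ℤ} (hm : m ≤ v.level) : x (v.trunc m) = (x v).trunc (m + lshift x) := by
  have h1 : Vertex.parent^[(v.level - m).toNat] v = v.trunc m := by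
    rw [parent_iter]; congr 1; omega
  rw [← h1, iso_iter hx, parent_iter]
  congr 1
  rw [iso_level hx]
  omega

lemma lshift_mul {x y : Equiv.Perm (Vertex q)} (hx : x ∈ IsomOmega q) :
    lshift (x * y) = lshift x + lshift y := by
  show ((x * y) (zeroVtx q 0)).level = _
  rw [Equiv.Perm.mul_apply, iso_level hx]
  show (y (zeroVtx q 0)).level + lshift x = lshift x + lshift y
  rw [add_comm]
  rfl

lemma lshift_one : lshift (1 : Equiv.Perm (Vertex q)) = 0 := rfl

lemma lshift_inv {x : Equiv.Perm (Vertex q)} (hx : x ∈ IsomOmega q) :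
    lshift x⁻¹ = - lshift x := by
  have := lshift_mul (q := q) (y := x⁻¹) hx
  rw [mul_inv_cancel] at this
  rw [lshift_one] at this
  omega

lemma iso_fix_zero {x : Equiv.Perm (Vertex q)} (hx : x ∈ IsomOmega q)
    (h0 : lshift x = 0) :
    ∃ M : ℤ, M ≤ 0 ∧ ∀ m ≤ M, x (zeroVtx q m) = zeroVtx q m := by
  obtain ⟨M, hM1, hM2, hM3⟩ := exists_trunc_zero (x (zeroVtx q 0))
  refine ⟨M, hM2, fun m hm => ?_⟩
  have h1 := iso_trunc hx (zeroVtx q 0) (m := m) (show m ≤ (zeroVtx q 0).level by show m ≤ (0:ℤ); omega)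
  rw [trunc_zeroVtx, h0, add_zero] at h1
  rw [h1]
  exact hM3 m hm

lemma elliptic_lshift {x : Equiv.Perm (Vertex q)} (hx : x ∈ IsomOmega q)
    (he : Elliptic x) : lshift x = 0 := by
  obtain ⟨v, hv⟩ := he
  have := iso_level hx v
  rw [hv] at this
  omega

lemma elliptic_iff_lshift {x : Equiv.Perm (Vertex q)} (hx : x ∈ IsomOmega q) :
    Elliptic x ↔ lshift x = 0 := by
  refine ⟨elliptic_lshift hx, fun h0 => ?_⟩
  obtain ⟨M, _, hM⟩ := iso_fix_zero hx h0
  exact ⟨zeroVtx q M, hM M le_rfl⟩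

lemma stab_fix_zero {x : Equiv.Perm (Vertex q)} (hx : x ∈ IsomOmega q)
    (h : x (zeroVtx q 0) = zeroVtx q 0) {m : ℤ} (hm : m ≤ 0) :
    x (zeroVtx q m) = zeroVtx q m := by
  have h0 : lshift x = 0 := by
    show (x (zeroVtx q 0)).level = 0
    rw [h]
    rfl
  have h1 := iso_trunc hx (zeroVtx q 0) (m := m) (show m ≤ (zeroVtx q 0).level by show m ≤ (0:ℤ); omega)
  rw [trunc_zeroVtx, h0, add_zero, h, trunc_zeroVtx] at h1
  exact h1

end Helpers

section Topo

variable {q : ℕ} [NeZero q]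

/-- The map realising the permutation topology. -/
def permEmb (X : Type*) : Equiv.Perm X → (X → X) × (X → X) :=
  fun g => ((g : X → X), ((g⁻¹ : Equiv.Perm X) : X → X))

lemma isOpen_eval (v w : Vertex q) :
    IsOpen {g : Equiv.Perm (Vertex q) | g v = w} := by
  letI : TopologicalSpace (Vertex q) := ⊥
  haveI : DiscreteTopology (Vertex q) := ⟨rfl⟩
  letI : TopologicalSpace (Vertex q → Vertex q) := funTop _
  have hc : Continuous (permEmb (Vertex q)) := continuous_induced_dom
  have : {g : Equiv.Perm (Vertex q) | g v = w}
      = permEmb (Vertex q) ⁻¹' ((fun p => p.1 v) ⁻¹' {w}) := rfl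
  rw [this]
  exact (((continuous_apply v).comp continuous_fst).comp hc).isOpen_preimage _
    (isOpen_discrete _)

lemma isOpen_lshift_eq (k : ℤ) :
    IsOpen {g : Equiv.Perm (Vertex q) | lshift g = k} := by
  have : {g : Equiv.Perm (Vertex q) | lshift g = k}
      = ⋃ (w : Vertex q) (_ : w.level = k), {g : Equiv.Perm (Vertex q) | g (zeroVtx q 0) = w} := by
    ext g
    simp only [Set.mem_setOf_eq, Set.mem_iUnion]
    constructor
    · intro h
      exact ⟨g (zeroVtx q 0), h, rfl⟩
    · rintro ⟨w, hw, hg⟩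
      show (g (zeroVtx q 0)).level = k
      rw [hg, hw]
  rw [this]
  exact isOpen_iUnion fun w => isOpen_iUnion fun _ => isOpen_eval _ _

lemma orbit_finite (n m : ℤ) :
    {w : Vertex q | w.level = n ∧ w.trunc m = zeroVtx q m}.Finite := by
  haveI := (Set.finite_Icc (m + 1) n).to_subtype
  refine Set.Finite.of_finite_image (f := fun w (i : Set.Icc (m + 1) n) => w.lab i)
    (Set.toFinite _) ?_
  rintro w ⟨hw1, hw2⟩ w' ⟨hw1', hw2'⟩ h
  refine Vertex.ext (by rw [hw1, hw1']) ?_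
  funext i
  by_cases h1 : n < i
  · rw [Fin.ext_iff]
    rw [w.zero_gt i (by omega), w'.zero_gt i (by omega)]
  · by_cases h2 : m + 1 ≤ i
    · exact congrFun h ⟨i, h2, by omega⟩
    · have e1 : w.lab i = (w.trunc m).lab i := by
        show w.lab i = if m < i then 0 else w.lab i
        rw [if_neg (by omega)]
      have e2 : w'.lab i = (w'.trunc m).lab i := by
        show w'.lab i = if m < i then 0 else w'.lab i
        rw [if_neg (by omega)]
      rw [e1, e2, hw2, hw2']

lemma stab_isCompact (P : Subgroup (Equiv.Perm (Vertex q))) (hP : IsScaleGroup P) :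
    IsCompact ((stabIn P (zeroVtx q 0) : Subgroup (Equiv.Perm (Vertex q))) :
      Set (Equiv.Perm (Vertex q))) := by
  letI : TopologicalSpace (Vertex q) := ⊥
  haveI : DiscreteTopology (Vertex q) := ⟨rfl⟩
  letI : TopologicalSpace (Vertex q → Vertex q) := funTop _
  have hind : Topology.IsInducing (permEmb (Vertex q)) := ⟨rfl⟩
  have hemb : Topology.IsEmbedding (permEmb (Vertex q)) := by
    refine ⟨hind, ?_⟩
    intro a b hab
    exact Equiv.coe_fn_injective (congrArg Prod.fst hab)
  rw [hemb.isCompact_iff]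
  obtain ⟨C, hCclosed, hCpre⟩ := hind.isClosed_iff.mp hP.2.1
  -- per-vertex finite orbit bounds
  choose M hM1 hM2 hM3 using fun v : Vertex q => exists_trunc_zero v
  set O : Vertex q → Set (Vertex q) := fun v => {w : Vertex q | w.level = v.level ∧ w.trunc (M v) = zeroVtx q (M v)}
    with hO
  have hOfin : ∀ v, (O v).Finite := fun v => orbit_finite _ _
  -- membership of the stabiliser image
  have hmem : ∀ g ∈ stabIn P (zeroVtx q 0), ∀ v : Vertex q, g v ∈ O v := by
    intro g hg v
    have hgi : g ∈ IsomOmega q := hP.1 hg.1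
    have h0 : lshift g = 0 := by
      show (g (zeroVtx q 0)).level = 0
      rw [hg.2]; rfl
    constructor
    · rw [iso_level hgi, h0, add_zero]
    · have htr := iso_trunc hgi v (hM1 v)
      rw [h0, add_zero] at htr
      rw [← htr, hM3 v (M v) le_rfl]
      exact stab_fix_zero hgi hg.2 (hM2 v)
  -- continuity of the evaluation maps
  have hc12 : ∀ y : Vertex q, Continuous fun p : (Vertex q → Vertex q) × (Vertex q → Vertex q) => p.1 (p.2 y) := by
    intro y
    rw [continuous_discrete_rng]
    intro w
    have : (fun p : (Vertex q → Vertex q) × (Vertex q → Vertex q) => p.1 (p.2 y)) ⁻¹' {w}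
        = ⋃ z : Vertex q, {p : (Vertex q → Vertex q) × (Vertex q → Vertex q) | p.2 y = z} ∩ {p | p.1 z = w} := by
      ext p
      simp only [Set.mem_preimage, Set.mem_singleton_iff, Set.mem_iUnion, Set.mem_inter_iff,
        Set.mem_setOf_eq]
      constructor
      · intro h; exact ⟨p.2 y, rfl, h⟩
      · rintro ⟨z, hz, hw⟩; rw [hz]; exact hw
    rw [this]
    refine isOpen_iUnion fun z => IsOpen.inter ?_ ?_
    · show IsOpen ((fun p : (Vertex q → Vertex q) × (Vertex q → Vertex q) => p.2 y) ⁻¹' {z})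
      exact ((continuous_apply y).comp continuous_snd).isOpen_preimage _ (isOpen_discrete _)
    · show IsOpen ((fun p : (Vertex q → Vertex q) × (Vertex q → Vertex q) => p.1 z) ⁻¹' {w})
      exact ((continuous_apply z).comp continuous_fst).isOpen_preimage _ (isOpen_discrete _)
  have hc21 : ∀ y : Vertex q, Continuous fun p : (Vertex q → Vertex q) × (Vertex q → Vertex q) => p.2 (p.1 y) := by
    intro y
    rw [continuous_discrete_rng]
    intro w
    have : (fun p : (Vertex q → Vertex q) × (Vertex q → Vertex q) => p.2 (p.1 y)) ⁻¹' {w}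
        = ⋃ z : Vertex q, {p : (Vertex q → Vertex q) × (Vertex q → Vertex q) | p.1 y = z} ∩ {p | p.2 z = w} := by
      ext p
      simp only [Set.mem_preimage, Set.mem_singleton_iff, Set.mem_iUnion, Set.mem_inter_iff,
        Set.mem_setOf_eq]
      constructor
      · intro h; exact ⟨p.1 y, rfl, h⟩
      · rintro ⟨z, hz, hw⟩; rw [hz]; exact hw
    rw [this]
    refine isOpen_iUnion fun z => IsOpen.inter ?_ ?_
    · show IsOpen ((fun p : (Vertex q → Vertex q) × (Vertex q → Vertex q) => p.1 y) ⁻¹' {z})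
      exact ((continuous_apply y).comp continuous_fst).isOpen_preimage _ (isOpen_discrete _)
    · show IsOpen ((fun p : (Vertex q → Vertex q) × (Vertex q → Vertex q) => p.2 z) ⁻¹' {w})
      exact ((continuous_apply z).comp continuous_snd).isOpen_preimage _ (isOpen_discrete _)
  -- the image set
  set T : Set ((Vertex q → Vertex q) × (Vertex q → Vertex q)) :=
    C ∩ {p | ∀ y, p.1 (p.2 y) = y} ∩ {p | ∀ y, p.2 (p.1 y) = y}
      ∩ {p | p.1 (zeroVtx q 0) = zeroVtx q 0} with hT
  have himage : permEmb (Vertex q) '' ((stabIn P (zeroVtx q 0) : Subgroup (Equiv.Perm (Vertex q))) :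
      Set (Equiv.Perm (Vertex q))) = T := by
    ext p
    constructor
    · rintro ⟨g, hg, rfl⟩
      have hg' : g ∈ stabIn P (zeroVtx q 0) := hg
      refine ⟨⟨⟨?_, ?_⟩, ?_⟩, ?_⟩
      · have hmemP : g ∈ permEmb (Vertex q) ⁻¹' C := by
          rw [hCpre]; exact hg'.1
        exact hmemP
      · intro y; exact g.apply_symm_apply y
      · intro y; exact g.symm_apply_apply y
      · exact hg'.2
    · rintro ⟨⟨⟨hCmem, h1⟩, h2⟩, h3⟩
      refine ⟨⟨p.1, p.2, fun y => h2 y, fun y => h1 y⟩, ⟨?_, h3⟩, ?_⟩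
      · have : (⟨p.1, p.2, fun y => h2 y, fun y => h1 y⟩ : Equiv.Perm (Vertex q))
            ∈ permEmb (Vertex q) ⁻¹' C := by
          show (p.1, p.2) ∈ C
          rw [Prod.mk.eta]
          exact hCmem
        rw [hCpre] at this
        exact this
      · show ((p.1, p.2) : (Vertex q → Vertex q) × (Vertex q → Vertex q)) = p
        rw [Prod.mk.eta]
  have hTclosed : IsClosed T := by
    refine IsClosed.inter (IsClosed.inter (IsClosed.inter hCclosed ?_) ?_) ?_
    · have : {p : (Vertex q → Vertex q) × (Vertex q → Vertex q) | ∀ y, p.1 (p.2 y) = y}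
          = ⋂ y : Vertex q, (fun p : (Vertex q → Vertex q) × (Vertex q → Vertex q) => p.1 (p.2 y)) ⁻¹' {y} := by
        ext p; simp [Set.mem_iInter]
      rw [this]
      exact isClosed_iInter fun y => IsClosed.preimage (hc12 y) isClosed_singleton
    · have : {p : (Vertex q → Vertex q) × (Vertex q → Vertex q) | ∀ y, p.2 (p.1 y) = y}
          = ⋂ y : Vertex q, (fun p : (Vertex q → Vertex q) × (Vertex q → Vertex q) => p.2 (p.1 y)) ⁻¹' {y} := by
        ext p; simp [Set.mem_iInter]
      rw [this]
      exact isClosed_iInter fun y => IsClosed.preimage (hc21 y) isClosed_singleton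
    · exact IsClosed.preimage ((continuous_apply (zeroVtx q 0)).comp continuous_fst)
        isClosed_singleton
  have hK : IsCompact ((Set.univ.pi O) ×ˢ (Set.univ.pi O) :
      Set ((Vertex q → Vertex q) × (Vertex q → Vertex q))) :=
    IsCompact.prod (isCompact_univ_pi fun v => (hOfin v).isCompact)
      (isCompact_univ_pi fun v => (hOfin v).isCompact)
  rw [himage]
  refine IsCompact.of_isClosed_subset hK hTclosed ?_
  intro p hp
  rw [← himage] at hp
  obtain ⟨g, hg, rfl⟩ := hp
  have hg' : g ∈ stabIn P (zeroVtx q 0) := hg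
  have hginv : g⁻¹ ∈ stabIn P (zeroVtx q 0) := (stabIn P (zeroVtx q 0)).inv_mem hg'
  constructor
  · intro v _
    exact hmem g hg' v
  · intro v _
    exact hmem g⁻¹ hginv v

lemma mem_stabIn {q : ℕ} {P : Subgroup (Equiv.Perm (Vertex q))} {v : Vertex q}
    {g : Equiv.Perm (Vertex q)} : g ∈ stabIn P v ↔ g ∈ P ∧ g v = v := Iff.rfl

end Topo

end Scale

open Scale in
/-- A scale group `P` has no non-trivial compact normal subgroup; its
elliptic part is an open normal subgroup which is the kernel of the surjective
level-shift homomorphism onto `ℤ`; and the stabiliser `V` of `ṽ₀` is a compact open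
subgroup with a conjugating element `x` whose conjugates of `V` exhaust the elliptic
part. -/
theorem statement_13 (q : ℕ) [NeZero q] (hq : 2 ≤ q)
    (P : Subgroup (Equiv.Perm (Vertex q))) (hP : IsScaleGroup P) :
    (∀ N : Subgroup (Equiv.Perm (Vertex q)), N ≤ P →
      (∀ p ∈ P, ∀ g ∈ N, p * g * p⁻¹ ∈ N) →
      IsCompact (N : Set (Equiv.Perm (Vertex q))) → N = ⊥) ∧
    (∃ Pe : Subgroup (Equiv.Perm (Vertex q)),
      (Pe : Set (Equiv.Perm (Vertex q))) = {g | g ∈ P ∧ Elliptic g} ∧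
      Pe ≤ P ∧
      IsOpen {p : P | (p : Equiv.Perm (Vertex q)) ∈ Pe} ∧
      (∀ p ∈ P, ∀ g ∈ Pe, p * g * p⁻¹ ∈ Pe) ∧
      (∀ p ∈ P, ∀ p' ∈ P, lshift (p * p') = lshift p + lshift p') ∧
      (∀ k : ℤ, ∃ p ∈ P, lshift p = k) ∧
      (∀ p ∈ P, (lshift p = 0 ↔ Elliptic p))) ∧
    (IsCompact ((stabIn P (zeroVtx q 0) : Subgroup (Equiv.Perm (Vertex q))) :
        Set (Equiv.Perm (Vertex q))) ∧
      IsOpen {p : P | (p : Equiv.Perm (Vertex q)) ∈ stabIn P (zeroVtx q 0)} ∧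
      ∃ x ∈ P, conjSub x (stabIn P (zeroVtx q 0)) ≤ stabIn P (zeroVtx q 0) ∧
        {g : Equiv.Perm (Vertex q) |
            ∃ n : ℤ, (x ^ n)⁻¹ * g * x ^ n ∈ stabIn P (zeroVtx q 0)} =
          {g : Equiv.Perm (Vertex q) | g ∈ P ∧ Elliptic g}) := by
  have hPiso : P ≤ IsomOmega q := hP.1
  have hPtrans : ∀ v w : Vertex q, ∃ x ∈ P, x v = w := hP.2.2
  refine ⟨?_, ?_, ?_, ?_, ?_⟩
  -- Part 1: no nontrivial compact normal subgroup
  · intro N hNP hNconj hNcomp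
    have hlsh0 : ∀ g ∈ N, lshift g = 0 := by
      intro g hg
      by_contra hk
      obtain ⟨t, ht⟩ := hNcomp.elim_finite_subcover
        (fun k : ℤ => {g : Equiv.Perm (Vertex q) | lshift g = k})
        (fun k => isOpen_lshift_eq k)
        (fun x _ => Set.mem_iUnion.mpr ⟨lshift x, rfl⟩)
      have hpow : ∀ n : ℕ, lshift (g ^ n) = (n : ℤ) * lshift g := by
        intro n
        induction n with
        | zero => simpa using lshift_one
        | succ m ih =>
          rw [pow_succ, lshift_mul (hPiso (hNP (N.pow_mem hg m))), ih]
          push_cast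
          ring
      set B := t.sup fun j => j.natAbs with hB
      have hmem : (g ^ (B + 1) : Equiv.Perm (Vertex q)) ∈ ⋃ k ∈ t,
          {g : Equiv.Perm (Vertex q) | lshift g = k} := ht (N.pow_mem hg (B + 1))
      rw [Set.mem_iUnion₂] at hmem
      obtain ⟨k, hkt, hgk⟩ := hmem
      have hgk' : lshift (g ^ (B + 1)) = k := hgk
      have hk1 : k = ((B + 1 : ℕ) : ℤ) * lshift g := by
        rw [← hpow (B + 1)]
        exact hgk'.symm
      have hle : k.natAbs ≤ B := Finset.le_sup (f := fun j : ℤ => j.natAbs) hkt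
      have h1 : 1 ≤ (lshift g).natAbs := by omega
      have habs : k.natAbs = (B + 1) * (lshift g).natAbs := by
        rw [hk1, Int.natAbs_mul, Int.natAbs_natCast]
      have hge : B + 1 ≤ (B + 1) * (lshift g).natAbs :=
        Nat.le_mul_of_pos_right _ (by omega)
      omega
    obtain ⟨t, ht⟩ := hNcomp.elim_finite_subcover
      (fun m : ℤ => {g : Equiv.Perm (Vertex q) | g (zeroVtx q m) = zeroVtx q m})
      (fun m => isOpen_eval _ _)
      (by
        intro g hg
        obtain ⟨M, _, hM⟩ := iso_fix_zero (hPiso (hNP hg)) (hlsh0 g hg)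
        exact Set.mem_iUnion.mpr ⟨M, hM M le_rfl⟩)
    have htne : t.Nonempty := by
      by_contra h
      rw [Finset.not_nonempty_iff_eq_empty] at h
      have h1 : (1 : Equiv.Perm (Vertex q)) ∈ ⋃ m ∈ t,
          {g : Equiv.Perm (Vertex q) | g (zeroVtx q m) = zeroVtx q m} := ht N.one_mem
      simp [h] at h1
    set M0 := t.min' htne with hM0
    have hfixM : ∀ g ∈ N, g (zeroVtx q M0) = zeroVtx q M0 := by
      intro g hg
      have hmem := ht hg
      rw [Set.mem_iUnion₂] at hmem
      obtain ⟨m, hmt, hgm⟩ := hmem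
      rw [Set.mem_setOf_eq] at hgm
      have hM0m : M0 ≤ m := t.min'_le m hmt
      have hgi := hPiso (hNP hg)
      have h1 := iso_trunc hgi (zeroVtx q m) (m := M0)
        (show M0 ≤ (zeroVtx q m).level from hM0m)
      rw [trunc_zeroVtx, hlsh0 g hg, add_zero, hgm, trunc_zeroVtx] at h1
      exact h1
    rw [eq_bot_iff]
    intro g hg
    rw [Subgroup.mem_bot]
    apply Equiv.ext
    intro v
    obtain ⟨p, hp, hpv⟩ := hPtrans (zeroVtx q M0) v
    have hconj : p⁻¹ * g * p ∈ N := by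
      have := hNconj p⁻¹ (P.inv_mem hp) g hg
      rwa [inv_inv] at this
    have hfix := hfixM _ hconj
    rw [Equiv.Perm.mul_apply, Equiv.Perm.mul_apply] at hfix
    have hgp : g (p (zeroVtx q M0)) = p (zeroVtx q M0) := by
      have := congrArg p hfix
      rwa [show ∀ x, p (p⁻¹ x) = x from fun x => (Equiv.eq_symm_apply p).mp rfl] at this
    rw [hpv] at hgp
    simpa using hgp
  -- Part 2: the elliptic part
  · have hmul : ∀ a b : Equiv.Perm (Vertex q), a ∈ P → b ∈ P →
        Elliptic a → Elliptic b → Elliptic (a * b) := by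
      intro a b ha hb hea heb
      rw [elliptic_iff_lshift (hPiso (P.mul_mem ha hb)), lshift_mul (hPiso ha),
        elliptic_lshift (hPiso ha) hea, elliptic_lshift (hPiso hb) heb]
      norm_num
    have hinv : ∀ a : Equiv.Perm (Vertex q), Elliptic a → Elliptic a⁻¹ := by
      intro a ⟨v, hv⟩
      refine ⟨v, ?_⟩
      rw [Equiv.Perm.inv_eq_iff_eq]
      exact hv.symm
    refine ⟨{ carrier := {g | g ∈ P ∧ Elliptic g}
              one_mem' := ⟨P.one_mem, ⟨zeroVtx q 0, rfl⟩⟩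
              mul_mem' := fun ha hb => ⟨P.mul_mem ha.1 hb.1, hmul _ _ ha.1 hb.1 ha.2 hb.2⟩
              inv_mem' := fun ha => ⟨P.inv_mem ha.1, hinv _ ha.2⟩ },
      rfl, fun g hg => hg.1, ?_, ?_, fun p hp p' _ => lshift_mul (hPiso hp), ?_, ?_⟩
    · have hset : {p : P | (p : Equiv.Perm (Vertex q)) ∈ P ∧ Elliptic (p : Equiv.Perm (Vertex q))}
          = Subtype.val ⁻¹' {g : Equiv.Perm (Vertex q) | lshift g = 0} := by
        ext p
        simp only [Set.mem_setOf_eq, Set.mem_preimage]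
        constructor
        · intro h
          exact elliptic_lshift (hPiso p.2) h.2
        · intro h
          exact ⟨p.2, (elliptic_iff_lshift (hPiso p.2)).mpr h⟩
      show IsOpen {p : P | (p : Equiv.Perm (Vertex q)) ∈ P ∧ Elliptic (p : Equiv.Perm (Vertex q))}
      rw [hset]
      exact (isOpen_lshift_eq 0).preimage continuous_subtype_val
    · intro p hp g hg
      obtain ⟨hgP, v, hv⟩ := hg
      refine ⟨P.mul_mem (P.mul_mem hp hgP) (P.inv_mem hp), ⟨p v, ?_⟩⟩
      rw [Equiv.Perm.mul_apply, Equiv.Perm.mul_apply, show ∀ y, p⁻¹ (p y) = y from fun y => Equiv.Perm.inv_eq_iff_eq.mpr rfl, hv]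
    · intro k
      obtain ⟨x, hx, hxv⟩ := hPtrans (zeroVtx q 0) (zeroVtx q k)
      refine ⟨x, hx, ?_⟩
      show (x (zeroVtx q 0)).level = k
      rw [hxv]
      rfl
    · intro p hp
      exact (elliptic_iff_lshift (hPiso hp)).symm
  -- Part 3a: compactness of the stabiliser
  · exact stab_isCompact P hP
  -- Part 3b: openness of the stabiliser
  · have hset : {p : P | (p : Equiv.Perm (Vertex q)) ∈ stabIn P (zeroVtx q 0)}
        = Subtype.val ⁻¹' {g : Equiv.Perm (Vertex q) | g (zeroVtx q 0) = zeroVtx q 0} := by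
      ext p
      simp only [Set.mem_setOf_eq, Set.mem_preimage, mem_stabIn]
      exact ⟨fun h => h.2, fun h => ⟨p.2, h⟩⟩
    rw [hset]
    exact (isOpen_eval _ _).preimage continuous_subtype_val
  -- Part 3c: the conjugating element
  · obtain ⟨x, hxP, hxv⟩ := hPtrans (zeroVtx q (-1)) (zeroVtx q 0)
    have hxinv : x⁻¹ (zeroVtx q 0) = zeroVtx q (-1) := by
      rw [Equiv.Perm.inv_eq_iff_eq]
      exact hxv.symm
    refine ⟨x, hxP, ?_, ?_⟩
    · intro g' hg'
      rw [conjSub, Subgroup.mem_map] at hg'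
      obtain ⟨g, hg, rfl⟩ := hg'
      rw [mem_stabIn] at hg
      have hgfix : g (zeroVtx q (-1)) = zeroVtx q (-1) :=
        stab_fix_zero (hPiso hg.1) hg.2 (by norm_num)
      refine mem_stabIn.mpr ⟨?_, ?_⟩
      · show x * g * x⁻¹ ∈ P
        exact P.mul_mem (P.mul_mem hxP hg.1) (P.inv_mem hxP)
      · show (x * g * x⁻¹) (zeroVtx q 0) = zeroVtx q 0
        rw [Equiv.Perm.mul_apply, Equiv.Perm.mul_apply, hxinv, hgfix, hxv]
    · have hxn : ∀ n : ℤ, x ^ n ∈ P := fun n => P.zpow_mem hxP n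
      ext g
      simp only [Set.mem_setOf_eq]
      constructor
      · rintro ⟨n, hn⟩
        rw [mem_stabIn] at hn
        constructor
        · have hgrw : g = x ^ n * ((x ^ n)⁻¹ * g * x ^ n) * (x ^ n)⁻¹ := by group
          rw [hgrw]
          exact P.mul_mem (P.mul_mem (hxn n) hn.1) (P.inv_mem (hxn n))
        · refine ⟨(x ^ n) (zeroVtx q 0), ?_⟩
          have h2 := hn.2
          rw [Equiv.Perm.mul_apply, Equiv.Perm.mul_apply] at h2
          have := congrArg (x ^ n) h2
          rwa [show ∀ y, (x ^ n) ((x ^ n)⁻¹ y) = y from fun y => (Equiv.eq_symm_apply (x ^ n)).mp rfl] at this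
      · rintro ⟨hgP, hgell⟩
        have hlx : lshift x = 1 := by
          have := iso_level (hPiso hxP) (zeroVtx q (-1))
          rw [hxv] at this
          have h0 : (zeroVtx q 0).level = 0 := rfl
          have h1 : (zeroVtx q (-1)).level = -1 := rfl
          omega
        have hlxi : lshift x⁻¹ = -1 := by
          rw [lshift_inv (hPiso hxP), hlx]
        have hpow : ∀ n : ℕ, ((x⁻¹) ^ n) (zeroVtx q 0) = zeroVtx q (-(n : ℤ)) := by
          intro n
          induction n with
          | zero => simp
          | succ m ih =>
            rw [pow_succ', Equiv.Perm.mul_apply, ih]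
            have h1 := iso_trunc (hPiso (P.inv_mem hxP)) (zeroVtx q 0) (m := -(m : ℤ))
              (show -(m : ℤ) ≤ (zeroVtx q 0).level by
                show -(m : ℤ) ≤ (0 : ℤ); omega)
            rw [trunc_zeroVtx, hlxi, hxinv, trunc_zeroVtx] at h1
            rw [h1]
            congr 1
            push_cast
            ring
        obtain ⟨M, hM0, hM⟩ := iso_fix_zero (hPiso hgP) (elliptic_lshift (hPiso hgP) hgell)
        have hxM : (x ^ M) (zeroVtx q 0) = zeroVtx q M := by
          have h1 : x ^ M = (x⁻¹) ^ ((-M).toNat) := by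
            rw [← zpow_natCast (x⁻¹), inv_zpow, ← zpow_neg]
            congr 1
            omega
          rw [h1, hpow ((-M).toNat)]
          congr 1
          omega
        refine ⟨M, mem_stabIn.mpr ⟨?_, ?_⟩⟩
        · exact P.mul_mem (P.mul_mem (P.inv_mem (hxn M)) hgP) (hxn M)
        · rw [Equiv.Perm.mul_apply, Equiv.Perm.mul_apply, hxM, hM M le_rfl,
            Equiv.Perm.inv_eq_iff_eq, hxM]
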